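/- Let U ≤ F_r be a finite-index subgroup with coset action π : F_r → Sym(F_r/U), and define v ∈ (ℤ/2ℤ)^r by v_i = 0 if π(g_i) is an even permutation and v_i = 1 if π(g_i) is odd. Then the image in GL_r(ℤ/2ℤ) of B(Stab_{Aut(F_r)}(U)) is contained in S(v) = {M : v·M = v}, where B : Aut(F_r) → GL_r(ℤ) is the map induced by abelianization. -/

import Mathlib

/-- The signed count of occurrences of the generator `g i` in a word of the free group,
as a homomorphism to `ℤ` (written multiplicatively). -/
def count {r : ℕ} (i : Fin r) : FreeGroup (Fin r) →* Multiplicative ℤ :=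
  FreeGroup.lift fun j => Multiplicative.ofAdd (if j = i then (1 : ℤ) else 0)

/-- The abelianization matrix `B γ` of an automorphism `γ` of the free group:
its (i,j) entry is the signed count of `g i` in `γ (g j)`. -/
def B {r : ℕ} (γ : MulAut (FreeGroup (Fin r))) : Matrix (Fin r) (Fin r) ℤ :=
  Matrix.of fun i j => Multiplicative.toAdd (count i (γ (FreeGroup.of j)))

/-- The parity homomorphism from the units of `ℤ` to `ZMod 2`. -/
def sgnHomZMod2 : ℤˣ →* Multiplicative (ZMod 2) where
  toFun u := Multiplicative.ofAdd (if u = 1 then 0 else 1)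
  map_one' := by simp
  map_mul' a b := by
    rcases Int.units_eq_one_or a with rfl | rfl <;>
      rcases Int.units_eq_one_or b with rfl | rfl <;> simp <;> decide

lemma sum_count {r : ℕ} (φ : FreeGroup (Fin r) →* Multiplicative (ZMod 2))
    (w : FreeGroup (Fin r)) :
    ∑ i, Multiplicative.toAdd (φ (FreeGroup.of i)) *
        ((Multiplicative.toAdd (count i w) : ℤ) : ZMod 2)
      = Multiplicative.toAdd (φ w) := by
  induction w using FreeGroup.induction_on with
  | C1 => simp
  | of j =>
      show _ = Multiplicative.toAdd (φ (FreeGroup.of j))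
      have : ∀ i : Fin r, count i ((FreeGroup.of j : FreeGroup (Fin r)))
          = Multiplicative.ofAdd (if j = i then (1 : ℤ) else 0) := by
        intro i
        show count i (FreeGroup.of j) = _
        simp [count]
      simp only [this]
      rw [Finset.sum_eq_single j]
      · simp
      · intro b _ hb; simp [Ne.symm hb]
      · simp
  | inv_of j ih =>
      simp only [map_inv, toAdd_inv, Int.cast_neg, mul_neg, Finset.sum_neg_distrib, neg_inj]
      exact ih
  | mul x y ihx ihy =>
      simp only [map_mul, toAdd_mul, Int.cast_add, mul_add, Finset.sum_add_distrib, ihx, ihy]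

theorem image_of_stabilizer_contained_in_row_vector_stabilizer
    (r : ℕ) (U : Subgroup (FreeGroup (Fin r))) (hfi : U.FiniteIndex)
    [Fintype (FreeGroup (Fin r) ⧸ U)] [DecidableEq (FreeGroup (Fin r) ⧸ U)]
    (v : Fin r → ZMod 2)
    (hv : ∀ i : Fin r,
      v i = if Equiv.Perm.sign
          (MulAction.toPermHom (FreeGroup (Fin r)) (FreeGroup (Fin r) ⧸ U)
            (FreeGroup.of i)) = 1
        then 0 else 1)
    (γ : MulAut (FreeGroup (Fin r))) (hγ : U.map γ.toMonoidHom = U) :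
    Matrix.vecMul v ((B γ).map (Int.castRingHom (ZMod 2))) = v := by
  classical
  set π := MulAction.toPermHom (FreeGroup (Fin r)) (FreeGroup (Fin r) ⧸ U) with hπ
  -- membership in U is preserved by γ
  have hmem : ∀ x : FreeGroup (Fin r), x ∈ U ↔ γ x ∈ U := by
    intro x
    constructor
    · intro hx
      have : γ x ∈ U.map γ.toMonoidHom := ⟨x, hx, rfl⟩
      rwa [hγ] at this
    · intro hx
      have : γ x ∈ U.map γ.toMonoidHom := by rw [hγ]; exact hx
      obtain ⟨y, hy, hxy⟩ := this
      have : y = x := γ.injective hxy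
      rwa [this] at hy
  -- the permutation of cosets induced by γ
  have hrel : ∀ a b : FreeGroup (Fin r),
      (QuotientGroup.leftRel U).r a b ↔ (QuotientGroup.leftRel U).r (γ a) (γ b) := by
    intro a b
    rw [QuotientGroup.leftRel_apply, QuotientGroup.leftRel_apply]
    rw [hmem (a⁻¹ * b)]
    simp
  let σ : Equiv.Perm (FreeGroup (Fin r) ⧸ U) := Quotient.congr γ.toEquiv hrel
  have hσmk : ∀ x : FreeGroup (Fin r), σ (QuotientGroup.mk x) = QuotientGroup.mk (γ x) :=
    fun x => rfl
  -- π (γ w) = σ * π w * σ⁻¹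
  have hconj : ∀ w : FreeGroup (Fin r), π (γ w) = σ * π w * σ⁻¹ := by
    intro w
    have key : π (γ w) * σ = σ * π w := by
      ext q
      induction q using QuotientGroup.induction_on with
      | H x =>
        simp only [Equiv.Perm.coe_mul, Function.comp_apply, hσmk]
        show π (γ w) (QuotientGroup.mk (γ x)) = σ (π w (QuotientGroup.mk x))
        have h1 : π (γ w) (QuotientGroup.mk (γ x)) = QuotientGroup.mk (γ w * γ x) := by
          simp [hπ, MulAction.toPermHom]
        have h2 : π w (QuotientGroup.mk x) = QuotientGroup.mk (w * x) := by
          simp [hπ, MulAction.toPermHom]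
        rw [h1, h2, hσmk, map_mul]
    calc π (γ w) = π (γ w) * σ * σ⁻¹ := by group
    _ = σ * π w * σ⁻¹ := by rw [key]
  -- the parity homomorphism
  let φ : FreeGroup (Fin r) →* Multiplicative (ZMod 2) :=
    sgnHomZMod2.comp (Equiv.Perm.sign.comp π)
  have hφγ : ∀ w, φ (γ w) = φ w := by
    intro w
    simp only [φ, MonoidHom.comp_apply, hconj w]
    congr 1
    simp only [map_mul, map_inv]
    simp [mul_comm]
    rw [← mul_assoc, Int.units_mul_self, one_mul]
  have hφof : ∀ i, Multiplicative.toAdd (φ (FreeGroup.of i)) = v i := by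
    intro i
    rw [hv i]
    rfl
  funext j
  have hvm : Matrix.vecMul v ((B γ).map (Int.castRingHom (ZMod 2))) j
      = ∑ i, v i * ((Multiplicative.toAdd (count i (γ (FreeGroup.of j))) : ℤ) : ZMod 2) := by
    simp [Matrix.vecMul, dotProduct, B, Matrix.map]
  rw [hvm]
  calc ∑ i, v i * ((Multiplicative.toAdd (count i (γ (FreeGroup.of j))) : ℤ) : ZMod 2)
      = ∑ i, Multiplicative.toAdd (φ (FreeGroup.of i)) *
          ((Multiplicative.toAdd (count i (γ (FreeGroup.of j))) : ℤ) : ZMod 2) := by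
        simp_rw [hφof]
    _ = Multiplicative.toAdd (φ (γ (FreeGroup.of j))) := sum_count φ _
    _ = Multiplicative.toAdd (φ (FreeGroup.of j)) := by rw [hφγ]
    _ = v j := hφof j
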